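/- Let X and Y be independent random variables, X exponentially distributed with mean λ_sr > 0 and Y exponentially distributed with mean λ_rd > 0, and fix s > 0. Then, as b̂ → ∞, E[ exp( −s·b̂·X²·Y ) ] ∼ π / ( 2·λ_sr·√( s·b̂·λ_rd ) ); that is, the ratio of the two sides tends to 1 as b̂ → ∞. -/

import Mathlib

open MeasureTheory ProbabilityTheory Real Filter

open Set Topology
open scoped ENNReal NNReal

lemma expMeasure_eq_withDensity (r : ℝ) :
    expMeasure r = volume.withDensity
      (fun y => ((exponentialPDFReal r y).toNNReal : ℝ≥0∞)) := rfl

lemma expMeasure_Iio_zero (r : ℝ) : expMeasure r (Iio 0) = 0 := by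
  rw [expMeasure, gammaMeasure, withDensity_apply _ measurableSet_Iio]
  exact lintegral_gammaPDF_of_nonpos le_rfl

lemma integral_expMeasure {r : ℝ} (hr : 0 < r) (g : ℝ → ℝ) :
    ∫ y, g y ∂(expMeasure r) = ∫ y in Ioi 0, r * Real.exp (-(r * y)) * g y := by
  rw [expMeasure_eq_withDensity,
    integral_withDensity_eq_integral_smul ((measurable_exponentialPDFReal r).real_toNNReal) g]
  rw [← integral_Ici_eq_integral_Ioi,
    ← setIntegral_eq_integral_of_forall_compl_eq_zero
      (s := Ici (0:ℝ)) (f := fun y => (exponentialPDFReal r y).toNNReal • g y) ?_]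
  · apply setIntegral_congr_fun measurableSet_Ici
    intro y hy
    have h0 : (0:ℝ) ≤ y := hy
    simp only [NNReal.smul_def, Real.coe_toNNReal _ (exponentialPDFReal_nonneg hr y)]
    simp [exponentialPDFReal, gammaPDFReal, if_pos h0, Real.rpow_one, Real.Gamma_one]
  · intro y hy
    have : y < 0 := not_le.mp hy
    simp [exponentialPDFReal, gammaPDFReal, if_neg (not_le.mpr this)]

lemma integral_exp_Ioi_zero {t : ℝ} (ht : 0 < t) :
    ∫ y in Ioi (0:ℝ), Real.exp (-(t * y)) = t⁻¹ := by
  have h := integral_comp_mul_left_Ioi (fun x => Real.exp (-x)) 0 ht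
  simp only [mul_zero, smul_eq_mul] at h
  rw [h, integral_exp_neg_Ioi_zero, mul_one]

lemma integral_exp_expMeasure {r c : ℝ} (hr : 0 < r) (hc : 0 ≤ c) :
    ∫ y, Real.exp (-(c * y)) ∂(expMeasure r) = r / (r + c) := by
  rw [integral_expMeasure hr]
  have h : ∀ y : ℝ, r * Real.exp (-(r*y)) * Real.exp (-(c*y)) = r * Real.exp (-((r+c)*y)) := by
    intro y; rw [mul_assoc, ← Real.exp_add]; ring_nf
  simp_rw [h]
  rw [integral_const_mul, integral_exp_Ioi_zero (by linarith), div_eq_mul_inv]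

lemma main_identity
    {Ω : Type*} [MeasurableSpace Ω] (P : Measure Ω) [IsProbabilityMeasure P]
    (X Y : Ω → ℝ) (hX : Measurable X) (hY : Measurable Y)
    (hXY : IndepFun X Y P)
    (lsr lrd : ℝ) (hlsr : 0 < lsr) (hlrd : 0 < lrd)
    (hXd : Measure.map X P = expMeasure lsr⁻¹)
    (hYd : Measure.map Y P = expMeasure lrd⁻¹)
    (s : ℝ) (hs : 0 < s) {b : ℝ} (hb : 0 < b) :
    (∫ ω, Real.exp (-(s * (b * X ω ^ 2 * Y ω))) ∂P)
      = ∫ x in Ioi (0:ℝ),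
          lsr⁻¹ * Real.exp (-(lsr⁻¹ * x)) * (lrd⁻¹ / (lrd⁻¹ + s * (b * x ^ 2))) := by
  haveI hνp : IsProbabilityMeasure (expMeasure lrd⁻¹) :=
    isProbabilityMeasure_expMeasure (inv_pos.2 hlrd)
  haveI hμp : IsProbabilityMeasure (expMeasure lsr⁻¹) :=
    isProbabilityMeasure_expMeasure (inv_pos.2 hlsr)
  set f : ℝ × ℝ → ℝ := fun p => Real.exp (-(s * (b * p.1 ^ 2 * p.2))) with hf
  have hfc : Continuous f := by fun_prop
  have hmap : Measure.map (fun ω => (X ω, Y ω)) P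
      = (Measure.map X P).prod (Measure.map Y P) :=
    (indepFun_iff_map_prod_eq_prod_map_map hX.aemeasurable hY.aemeasurable).mp hXY
  have h1 : (∫ ω, f (X ω, Y ω) ∂P)
      = ∫ p, f p ∂((expMeasure lsr⁻¹).prod (expMeasure lrd⁻¹)) := by
    rw [← hXd, ← hYd, ← hmap,
      integral_map (hX.prodMk hY).aemeasurable hfc.aestronglyMeasurable]
  have hae2 : ∀ᵐ p ∂((expMeasure lsr⁻¹).prod (expMeasure lrd⁻¹)), 0 ≤ p.2 := by
    rw [ae_iff]
    have hset : {p : ℝ × ℝ | ¬ 0 ≤ p.2} = (univ : Set ℝ) ×ˢ Iio 0 := by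
      ext p; simp [not_le]
    rw [hset, Measure.prod_prod, expMeasure_Iio_zero, mul_zero]
  have hint : Integrable f ((expMeasure lsr⁻¹).prod (expMeasure lrd⁻¹)) := by
    apply Integrable.mono' (integrable_const 1) hfc.aestronglyMeasurable
    filter_upwards [hae2] with p hp
    rw [Real.norm_eq_abs, abs_of_pos (Real.exp_pos _)]
    rw [Real.exp_le_one_iff]
    have : 0 ≤ s * (b * p.1 ^ 2 * p.2) := by positivity
    linarith
  have h2 : (∫ ω, Real.exp (-(s * (b * X ω ^ 2 * Y ω))) ∂P) = ∫ ω, f (X ω, Y ω) ∂P := rfl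
  rw [h2, h1, integral_prod f hint]
  have hinner : ∀ x : ℝ,
      (∫ y, f (x, y) ∂(expMeasure lrd⁻¹)) = lrd⁻¹ / (lrd⁻¹ + s * (b * x ^ 2)) := by
    intro x
    have hcongr : (fun y => f (x, y)) = fun y => Real.exp (-((s * (b * x ^ 2)) * y)) := by
      funext y; simp only [hf]; ring_nf
    rw [hcongr, integral_exp_expMeasure (inv_pos.2 hlrd) (by positivity)]
  simp_rw [hinner]
  exact integral_expMeasure (inv_pos.2 hlsr) _

/-- For independent exponential `X` (mean `λ_sr`) and `Y` (mean `λ_rd`) and fixed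
`s > 0`, as `b̂ → ∞`, `E[exp(−s·b̂·X²·Y)] ∼ π/(2·λ_sr·√(s·b̂·λ_rd))`; that is, the ratio of the
two sides tends to `1`. -/
theorem asymptotic_mgf_equiv
    {Ω : Type*} [MeasurableSpace Ω] (P : Measure Ω) [IsProbabilityMeasure P]
    (X Y : Ω → ℝ) (hX : Measurable X) (hY : Measurable Y)
    (hXY : IndepFun X Y P)
    (lsr lrd : ℝ) (hlsr : 0 < lsr) (hlrd : 0 < lrd)
    (hXd : Measure.map X P = expMeasure lsr⁻¹)
    (hYd : Measure.map Y P = expMeasure lrd⁻¹)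
    (s : ℝ) (hs : 0 < s) :
    Tendsto (fun b : ℝ =>
        (∫ ω, Real.exp (-(s * (b * X ω ^ 2 * Y ω))) ∂P) /
          (π / (2 * lsr * Real.sqrt (s * b * lrd))))
      atTop (nhds 1) := by
  set G : ℝ → ℝ → ℝ := fun b u =>
    lsr⁻¹ * Real.exp (-(lsr⁻¹ * (u / Real.sqrt (s * b * lrd)))) * (1 + u ^ 2)⁻¹ with hGdef
  have hsq : ∀ b : ℝ, 0 < b → 0 < Real.sqrt (s * b * lrd) := fun b hb =>
    Real.sqrt_pos.2 (by positivity)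
  -- key identity
  have key : ∀ b : ℝ, 0 < b →
      (∫ ω, Real.exp (-(s * (b * X ω ^ 2 * Y ω))) ∂P)
        = (Real.sqrt (s * b * lrd))⁻¹ * ∫ u in Ioi (0:ℝ), G b u := by
    intro b hb
    rw [main_identity P X Y hX hY hXY lsr lrd hlsr hlrd hXd hYd s hs hb]
    have h1 : ∀ x : ℝ,
        lsr⁻¹ * Real.exp (-(lsr⁻¹ * x)) * (lrd⁻¹ / (lrd⁻¹ + s * (b * x ^ 2)))
          = G b (Real.sqrt (s * b * lrd) * x) := by
      intro x
      have e1 : Real.sqrt (s * b * lrd) * x / Real.sqrt (s * b * lrd) = x :=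
        mul_div_cancel_left₀ _ (hsq b hb).ne'
      have e2 : (Real.sqrt (s * b * lrd) * x) ^ 2 = s * b * lrd * x ^ 2 := by
        rw [mul_pow, Real.sq_sqrt (by positivity)]
      simp only [hGdef, e1, e2]
      congr 1
      have d1 : lrd⁻¹ + s * (b * x ^ 2) > 0 := by positivity
      have d2 : (1:ℝ) + s * b * lrd * x ^ 2 > 0 := by positivity
      field_simp
    simp_rw [h1]
    rw [integral_comp_mul_left_Ioi (G b) 0 (hsq b hb), mul_zero, smul_eq_mul]
  -- dominated convergence
  have hlim : Tendsto (fun b => ∫ u in Ioi (0:ℝ), G b u) atTop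
      (𝓝 (∫ u in Ioi (0:ℝ), lsr⁻¹ * (1 + u ^ 2)⁻¹)) := by
    apply tendsto_integral_filter_of_dominated_convergence
      (fun u => lsr⁻¹ * (1 + u ^ 2)⁻¹)
    · have hc : ∀ b : ℝ, Continuous (G b) := by
        intro b
        have h1 : Continuous fun u : ℝ => (1 + u ^ 2)⁻¹ := by
          apply Continuous.inv₀ (by fun_prop)
          intro x; positivity
        exact (continuous_const.mul (Real.continuous_exp.comp (by fun_prop))).mul h1
      exact Eventually.of_forall fun b => ((hc b).aestronglyMeasurable).restrict
    · filter_upwards [eventually_ge_atTop (0:ℝ)] with b hb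
      rw [ae_restrict_iff' measurableSet_Ioi]
      apply Eventually.of_forall
      intro u hu
      have hu0 : (0:ℝ) ≤ u := (le_of_lt hu)
      have hexp : Real.exp (-(lsr⁻¹ * (u / Real.sqrt (s * b * lrd)))) ≤ 1 := by
        rw [Real.exp_le_one_iff]
        have : 0 ≤ lsr⁻¹ * (u / Real.sqrt (s * b * lrd)) := by positivity
        linarith
      rw [Real.norm_eq_abs, abs_of_nonneg (by positivity)]
      calc lsr⁻¹ * Real.exp (-(lsr⁻¹ * (u / Real.sqrt (s * b * lrd)))) * (1 + u ^ 2)⁻¹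
          ≤ lsr⁻¹ * 1 * (1 + u ^ 2)⁻¹ := by
            apply mul_le_mul_of_nonneg_right _ (by positivity)
            exact mul_le_mul_of_nonneg_left hexp (by positivity)
        _ = lsr⁻¹ * (1 + u ^ 2)⁻¹ := by ring
    · exact (integrable_inv_one_add_sq.const_mul _).integrableOn
    · apply Eventually.of_forall
      intro u
      have hT : Tendsto (fun b : ℝ => Real.sqrt (s * b * lrd)) atTop atTop := by
        have h2 : Tendsto (fun b : ℝ => s * b * lrd) atTop atTop :=
          Tendsto.atTop_mul_const hlrd (tendsto_id.const_mul_atTop hs)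
        have h1 : Tendsto (fun x : ℝ => x ^ ((1:ℝ)/2)) atTop atTop :=
          tendsto_rpow_atTop (by norm_num)
        have : (fun b : ℝ => Real.sqrt (s * b * lrd))
            = (fun x : ℝ => x ^ ((1:ℝ)/2)) ∘ (fun b => s * b * lrd) := by
          funext b; simp [Real.rpow_natCast, Real.sqrt_eq_rpow]
        rw [this]
        exact h1.comp h2
      have h0 : Tendsto (fun b : ℝ => u / Real.sqrt (s * b * lrd)) atTop (𝓝 0) :=
        Tendsto.div_atTop tendsto_const_nhds hT
      have hn : Tendsto (fun b : ℝ => -(lsr⁻¹ * (u / Real.sqrt (s * b * lrd)))) atTop (𝓝 0) := by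
        have := (h0.const_mul lsr⁻¹).neg
        simpa using this
      have hE : Tendsto (fun b : ℝ => Real.exp (-(lsr⁻¹ * (u / Real.sqrt (s * b * lrd)))))
          atTop (𝓝 1) := by
        have := (Real.continuous_exp.tendsto 0).comp hn
        simpa [Function.comp_def] using this
      have := (hE.const_mul lsr⁻¹).mul_const ((1 + u ^ 2)⁻¹)
      simpa using this
  have hval : (∫ u in Ioi (0:ℝ), lsr⁻¹ * (1 + u ^ 2)⁻¹) = lsr⁻¹ * (π / 2) := by
    rw [integral_const_mul, integral_Ioi_inv_one_add_sq]
    simp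
  rw [hval] at hlim
  -- final algebra
  have hfin : Tendsto
      (fun b => (∫ u in Ioi (0:ℝ), G b u) * (2 * lsr / π)) atTop
      (𝓝 ((lsr⁻¹ * (π / 2)) * (2 * lsr / π))) := hlim.mul_const _
  have hone : (lsr⁻¹ * (π / 2)) * (2 * lsr / π) = 1 := by
    field_simp
  rw [hone] at hfin
  apply hfin.congr'
  filter_upwards [eventually_gt_atTop (0:ℝ)] with b hb
  rw [key b hb]
  have h1 : Real.sqrt (s * b * lrd) ≠ 0 := (hsq b hb).ne'
  have h2 : π ≠ 0 := Real.pi_ne_zero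
  field_simp
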